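/- Fix σ_a ∈ ℝ with 0 < σ_a² < 1, let f(x) = (√(1−x²) + (π − arccos x)·x)/π, let g : [−1,1] → [−1,1] send t to the unique fixed point of x = σ_a²·f(x) + (1−σ_a²)·t, set ∠* = g(0), let h(x) = x/(1 − σ_a²·(π − arccos x)/π), and define k = h ∘ g. Then k is differentiable at 0 with k′(0) = h′(∠*)·(1−σ_a²)/(1 − σ_a²·f′(∠*)), where f′(x) = (π − arccos x)/π. -/

import Mathlib

open Real Set Filter Topology

/-- The dual kernel of the normalized ReLU activation `φ(x) = √2·max(x,0)`. -/
noncomputable def fDual (x : ℝ) : ℝ :=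
  (Real.sqrt (1 - x ^ 2) + (Real.pi - Real.arccos x) * x) / Real.pi

/-- The derivative `f′(x) = (π − arccos x)/π` of the dual kernel. -/
noncomputable def fDual' (x : ℝ) : ℝ := (Real.pi - Real.arccos x) / Real.pi

/-- The map `h(x) = x/(1 − σa²·(π − arccos x)/π)` defining the Implicit-NTK. -/
noncomputable def hNTK (σa x : ℝ) : ℝ :=
  x / (1 - σa ^ 2 * (Real.pi - Real.arccos x) / Real.pi)

lemma fDual_hasDerivAt {x : ℝ} (h1 : -1 < x) (h2 : x < 1) :
    HasDerivAt fDual (fDual' x) x := by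
  have hx2 : (0:ℝ) < 1 - x ^ 2 := by nlinarith
  have hs : Real.sqrt (1 - x ^ 2) ≠ 0 := by positivity
  have d1 : HasDerivAt (fun y : ℝ => 1 - y ^ 2) (-(2 * x ^ 1)) x := by
    simpa using (hasDerivAt_pow 2 x).const_sub 1
  have dsqrt := d1.sqrt hx2.ne'
  have darc : HasDerivAt (fun y : ℝ => (Real.pi - Real.arccos y) * y)
      (-(-(1 / Real.sqrt (1 - x ^ 2))) * x + (Real.pi - Real.arccos x) * 1) x :=
    ((Real.hasDerivAt_arccos h1.ne' h2.ne).const_sub Real.pi).mul (hasDerivAt_id x)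
  have := (dsqrt.add darc).div_const Real.pi
  refine this.congr_deriv ?_
  symm
  unfold fDual'
  rw [div_eq_div_iff Real.pi_ne_zero Real.pi_ne_zero] at *
  field_simp
  ring

lemma fDual'_cont : Continuous fDual' :=
  (continuous_const.sub Real.continuous_arccos).div_const _

lemma fDual_cont : Continuous fDual := by
  unfold fDual
  exact ((Real.continuous_sqrt.comp (by continuity)).add
    ((continuous_const.sub Real.continuous_arccos).mul continuous_id)).div_const _

lemma fDual'_mem {x : ℝ} : fDual' x ∈ Icc (0:ℝ) 1 := by
  have h1 := Real.arccos_nonneg x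
  have h2 := Real.arccos_le_pi x
  have hp := Real.pi_pos
  unfold fDual'
  constructor
  · apply div_nonneg <;> linarith
  · rw [div_le_one hp]; linarith

lemma fDual_hasDerivWithinAt : ∀ x ∈ Icc (-1:ℝ) 1,
    HasDerivWithinAt fDual (fDual' x) (Icc (-1:ℝ) 1) x := by
  have hdiff : DifferentiableOn ℝ fDual (Ioo (-1:ℝ) 1) := fun y hy =>
    (fDual_hasDerivAt hy.1 hy.2).differentiableAt.differentiableWithinAt
  intro x hx
  rcases eq_or_lt_of_le hx.1 with h1 | h1
  · have key : HasDerivWithinAt fDual (fDual' (-1)) (Ici (-1:ℝ)) (-1) := by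
      apply hasDerivWithinAt_Ici_of_tendsto_deriv hdiff fDual_cont.continuousWithinAt
        (Ioo_mem_nhdsGT_of_mem ⟨le_refl _, by norm_num⟩)
      have heq : ∀ᶠ y in 𝓝[>] (-1:ℝ), fDual' y = deriv fDual y := by
        filter_upwards [Ioo_mem_nhdsGT_of_mem (show (-1:ℝ) ∈ Ico (-1:ℝ) 1 by constructor <;> norm_num)]
          with y hy
        exact ((fDual_hasDerivAt hy.1 hy.2).deriv).symm
      exact Filter.Tendsto.congr' heq
        (tendsto_nhdsWithin_of_tendsto_nhds (fDual'_cont.continuousAt.tendsto))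
    rw [← h1]
    exact key.mono Icc_subset_Ici_self
  rcases eq_or_lt_of_le hx.2 with h2 | h2
  · have key : HasDerivWithinAt fDual (fDual' 1) (Iic (1:ℝ)) 1 := by
      apply hasDerivWithinAt_Iic_of_tendsto_deriv hdiff fDual_cont.continuousWithinAt
        (Ioo_mem_nhdsLT_of_mem ⟨by norm_num, le_refl _⟩)
      have heq : ∀ᶠ y in 𝓝[<] (1:ℝ), fDual' y = deriv fDual y := by
        filter_upwards [Ioo_mem_nhdsLT_of_mem (show (1:ℝ) ∈ Ioc (-1:ℝ) 1 by constructor <;> norm_num)]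
          with y hy
        exact ((fDual_hasDerivAt hy.1 hy.2).deriv).symm
      exact Filter.Tendsto.congr' heq
        (tendsto_nhdsWithin_of_tendsto_nhds (fDual'_cont.continuousAt.tendsto))
    rw [h2]
    exact key.mono Icc_subset_Iic_self
  · exact (fDual_hasDerivAt h1 h2).hasDerivWithinAt

lemma fDual_lip {a b : ℝ} (ha : a ∈ Icc (-1:ℝ) 1) (hb : b ∈ Icc (-1:ℝ) 1) :
    |fDual b - fDual a| ≤ |b - a| := by
  have := (convex_Icc (-1:ℝ) 1).norm_image_sub_le_of_norm_hasDerivWithin_le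
    fDual_hasDerivWithinAt (fun x _ => by
      rw [Real.norm_eq_abs, abs_of_nonneg fDual'_mem.1]; exact fDual'_mem.2) ha hb
  simpa using this

theorem stmt_11 (σa : ℝ) (hσ0 : 0 < σa ^ 2) (hσ1 : σa ^ 2 < 1)
    (g : ℝ → ℝ)
    (hg : ∀ t ∈ Set.Icc (-1 : ℝ) 1,
      g t ∈ Set.Icc (-1 : ℝ) 1 ∧ g t = σa ^ 2 * fDual (g t) + (1 - σa ^ 2) * t) :
    HasDerivAt (hNTK σa ∘ g)
      (deriv (hNTK σa) (g 0) * ((1 - σa ^ 2) / (1 - σa ^ 2 * fDual' (g 0)))) 0 := by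
  set s : ℝ := σa ^ 2 with hs_def
  have h00 := hg 0 (by constructor <;> norm_num)
  have hfix : g 0 = s * fDual (g 0) := by linear_combination h00.2
  -- g 0 is in the open interval
  have hne1 : g 0 ≠ 1 := by
    intro h
    rw [h] at hfix
    have : fDual 1 = 1 := by
      unfold fDual
      rw [Real.arccos_one]
      simp [Real.pi_ne_zero]
    rw [this, mul_one] at hfix
    linarith
  have hne1' : g 0 ≠ -1 := by
    intro h
    rw [h] at hfix
    have : fDual (-1) = 0 := by
      unfold fDual
      rw [Real.arccos_neg_one]
      norm_num
    rw [this, mul_zero] at hfix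
    linarith
  have hg0 : g 0 ∈ Set.Ioo (-1:ℝ) 1 :=
    ⟨lt_of_le_of_ne h00.1.1 (Ne.symm hne1'), lt_of_le_of_ne h00.1.2 hne1⟩
  -- positivity of the denominator
  set D : ℝ := 1 - s * fDual' (g 0) with hD_def
  have hD : 0 < D := by
    have h1 : fDual' (g 0) ≤ 1 := fDual'_mem.2
    have h2 : 0 ≤ fDual' (g 0) := fDual'_mem.1
    have : s * fDual' (g 0) ≤ s * 1 := by nlinarith
    simp only [hD_def]; nlinarith
  set c : ℝ := (1 - s) / D with hc_def
  -- Lipschitz estimate for g near 0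
  have hlip : ∀ t ∈ Set.Icc (-1:ℝ) 1, |g t - g 0| ≤ |t| := by
    intro t ht
    have hgt := hg t ht
    have hfl := fDual_lip h00.1 hgt.1
    have heq : g t - g 0 = s * (fDual (g t) - fDual (g 0)) + (1 - s) * t := by
      linear_combination hgt.2 - h00.2
    have habs : |g t - g 0| ≤ s * |fDual (g t) - fDual (g 0)| + (1 - s) * |t| := by
      rw [heq]
      calc |s * (fDual (g t) - fDual (g 0)) + (1 - s) * t|
          ≤ |s * (fDual (g t) - fDual (g 0))| + |(1 - s) * t| := abs_add_le _ _
        _ = s * |fDual (g t) - fDual (g 0)| + (1 - s) * |t| := by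
            rw [abs_mul, abs_mul, abs_of_nonneg hσ0.le, abs_of_nonneg (by linarith : (0:ℝ) ≤ 1 - s)]
    nlinarith [abs_nonneg (g t - g 0), abs_nonneg t]
  have hIcc : Set.Icc (-1:ℝ) 1 ∈ 𝓝 (0:ℝ) := by
    apply Icc_mem_nhds <;> norm_num
  have hlip' : ∀ᶠ t in 𝓝 (0:ℝ), |g t - g 0| ≤ |t| := by
    filter_upwards [hIcc] with t ht using hlip t ht
  -- continuity of g at 0
  have hcont : Filter.Tendsto g (𝓝 0) (𝓝 (g 0)) := by
    have h1 : Filter.Tendsto (fun t => g t - g 0) (𝓝 0) (𝓝 0) :=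
      squeeze_zero_norm' (by simpa using hlip') (by simpa using continuous_abs.tendsto (0:ℝ))
    have := h1.add_const (g 0)
    simpa using this
  -- big-O bound
  have hO : (fun t => g t - g 0) =O[𝓝 (0:ℝ)] (fun t => t) := by
    apply Asymptotics.IsBigO.of_bound 1
    filter_upwards [hlip'] with t ht
    simpa using ht
  -- derivative of g at 0
  have hgderiv : HasDerivAt g c 0 := by
    rw [hasDerivAt_iff_isLittleO]
    have hlo := (hasDerivAt_iff_isLittleO.1 (fDual_hasDerivAt hg0.1 hg0.2)).comp_tendsto hcont
    have hlo2 : (fun t => fDual (g t) - fDual (g 0) - (g t - g 0) * fDual' (g 0))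
        =o[𝓝 (0:ℝ)] (fun t => t) := by
      simpa [smul_eq_mul, Function.comp_def] using hlo.trans_isBigO hO
    have hlo3 := hlo2.const_mul_left (s / D)
    apply hlo3.congr' _ (Filter.Eventually.of_forall fun x => by ring)
    filter_upwards [hIcc] with t ht
    have hgt := hg t ht
    have e1 : g t = s * fDual (g t) + (1 - s) * t := hgt.2
    have hE : s * (fDual (g t) - fDual (g 0) - (g t - g 0) * fDual' (g 0))
        = D * (g t - g 0) - (1 - s) * t := by
      rw [hD_def]; linear_combination hfix - e1
    rw [smul_eq_mul, hc_def, sub_zero, div_mul_eq_mul_div, hE, sub_div,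
      mul_div_cancel_left₀ _ hD.ne']
    ring
  -- differentiability of hNTK at g 0
  have ha : DifferentiableAt ℝ Real.arccos (g 0) :=
    (Real.hasDerivAt_arccos hne1' hne1).differentiableAt
  have hden : (1:ℝ) - σa ^ 2 * (Real.pi - Real.arccos (g 0)) / Real.pi ≠ 0 := by
    have : σa ^ 2 * (Real.pi - Real.arccos (g 0)) / Real.pi = s * fDual' (g 0) := by
      unfold fDual'; rw [hs_def]; ring
    rw [this]
    exact ne_of_gt hD
  have hd1 : DifferentiableAt ℝ
      (fun x => 1 - σa ^ 2 * (Real.pi - Real.arccos x) / Real.pi) (g 0) := by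
    apply DifferentiableAt.const_sub
    apply DifferentiableAt.div_const
    exact ((differentiableAt_const Real.pi).sub ha).const_mul _
  have hh : DifferentiableAt ℝ (hNTK σa) (g 0) := by
    unfold hNTK
    exact DifferentiableAt.div differentiableAt_id hd1 hden
  exact hh.hasDerivAt.comp 0 hgderiv
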